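/- arXiv:2512.02214 — 3 statements merged into one kernel-verified Lean document; each statement's English description precedes it below -/
import Mathlib

section
/- Let M ≥ 1, t > 0, and for each i ∈ {1,...,M} let d_i > 0 and n_i ≥ 0 with ∑_i n_i = t. Suppose the potentials are balanced up to a factor 3, i.e., d_i √(n_i) ≤ 3 d_j √(n_j) for all i, j. Then for every j, n_j ≥ (t/81) · (1/d_j²) / (∑_{i=1}^M 1/d_i²). -/
theorem stmt_1 (M : ℕ) (hM : 1 ≤ M) (t : ℝ) (ht : 0 < t) (d n : Fin M → ℝ)
    (hd : ∀ i, 0 < d i) (hn : ∀ i, 0 ≤ n i) (hsum : ∑ i, n i = t)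
    (hbal : ∀ i j, d i * Real.sqrt (n i) ≤ 3 * (d j * Real.sqrt (n j))) :
    ∀ j, n j ≥ (t / 81) * (1 / (d j) ^ 2) / (∑ i, 1 / (d i) ^ 2) := by
  intro j
  have hne : Nonempty (Fin M) := Fin.pos_iff_nonempty.mp hM
  have hS : 0 < ∑ i, 1 / (d i) ^ 2 :=
    Finset.sum_pos (fun i _ => by have := hd i; positivity) Finset.univ_nonempty
  set S := ∑ i, 1 / (d i) ^ 2 with hSdef
  have key : ∀ i, n i ≤ 9 * (d j) ^ 2 * n j * (1 / (d i) ^ 2) := by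
    intro i
    have h := hbal i j
    have hnn : 0 ≤ d i * Real.sqrt (n i) := by have := hd i; positivity
    have hsq := mul_self_le_mul_self hnn h
    have e1 : d i * Real.sqrt (n i) * (d i * Real.sqrt (n i)) = (d i)^2 * n i := by
      have := Real.mul_self_sqrt (hn i); ring_nf; nlinarith [Real.sq_sqrt (hn i)]
    have e2 : 3 * (d j * Real.sqrt (n j)) * (3 * (d j * Real.sqrt (n j)))
        = 9 * (d j)^2 * n j := by
      have := Real.sq_sqrt (hn j); nlinarith
    rw [e1, e2] at hsq
    have hdi : (0:ℝ) < (d i)^2 := by have := hd i; positivity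
    rw [mul_one_div, le_div_iff₀ hdi]
    nlinarith
  have hsum2 : t ≤ 9 * (d j) ^ 2 * n j * S := by
    rw [← hsum, hSdef, Finset.mul_sum]
    exact Finset.sum_le_sum fun i _ => key i
  have hdj : (0:ℝ) < (d j)^2 := by have := hd j; positivity
  rw [ge_iff_le, div_le_iff₀ hS, mul_one_div, div_le_iff₀ hdj]
  have hnj : 0 ≤ n j := hn j
  nlinarith [mul_nonneg (mul_nonneg hnj hS.le) hdj.le]
end

section
/- Let v* be a real number, and for agent i let n > 0, let ū be its cumulative expected reward, u its cumulative realized reward, and suppose: (a) |u − ū| ≤ c√(n · L) for some c, L ≥ 0 (concentration), (b) n·v* − ū ≤ d√n for some d ≥ 0 (agent i is well-specified with regret bound d√n). Then u/n + c√(L/n) + d/√n ≥ v* ≥ ū/n − 0, and in particular for any other agent j with counts n_j > 0, realized reward u_j, expected reward ū_j satisfying the same concentration |u_j − ū_j| ≤ c√(n_j · L_j) and ū_j/n_j ≤ v*, we have u/n + c√(L/n) + d/√n ≥ u_j/n_j − c√(L_j/n_j). -/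
lemma sqrt_mul_div_aux (m L : ℝ) (hm : 0 < m) (hL : 0 ≤ L) :
    Real.sqrt (m * L) / m = Real.sqrt (L / m) := by
  have hs : (0:ℝ) < Real.sqrt m := Real.sqrt_pos.mpr hm
  have h2 : Real.sqrt m * Real.sqrt m = m := Real.mul_self_sqrt hm.le
  rw [Real.sqrt_mul hm.le, Real.sqrt_div hL]
  calc Real.sqrt m * Real.sqrt L / m
      = Real.sqrt m * Real.sqrt L / (Real.sqrt m * Real.sqrt m) := by rw [h2]
    _ = Real.sqrt L / Real.sqrt m := mul_div_mul_left _ _ hs.ne'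

theorem stmt_6 (vstar : ℝ) (n u ubar c L d : ℝ)
    (hn : 0 < n) (hc : 0 ≤ c) (hL : 0 ≤ L) (hd : 0 ≤ d)
    (hconc : |u - ubar| ≤ c * Real.sqrt (n * L))
    (hreg : n * vstar - ubar ≤ d * Real.sqrt n)
    (hopt : ubar / n ≤ vstar) :
    (u / n + c * Real.sqrt (L / n) + d / Real.sqrt n ≥ vstar) ∧
    (vstar ≥ ubar / n) ∧
    (∀ nj uj ubarj Lj : ℝ, 0 < nj → 0 ≤ Lj →
      |uj - ubarj| ≤ c * Real.sqrt (nj * Lj) → ubarj / nj ≤ vstar →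
      u / n + c * Real.sqrt (L / n) + d / Real.sqrt n ≥
        uj / nj - c * Real.sqrt (Lj / nj)) := by
  have h1 := abs_le.mp hconc
  have hsq : Real.sqrt n * Real.sqrt n = n := Real.mul_self_sqrt hn.le
  have hsn : 0 < Real.sqrt n := Real.sqrt_pos.mpr hn
  have hkey : Real.sqrt (n * L) / n = Real.sqrt (L / n) := sqrt_mul_div_aux n L hn hL
  have hdn : d * Real.sqrt n / n = d / Real.sqrt n := by
    calc d * Real.sqrt n / n
        = d * Real.sqrt n / (Real.sqrt n * Real.sqrt n) := by rw [hsq]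
      _ = d / Real.sqrt n := mul_div_mul_right _ _ hsn.ne'
  have hmain : u / n + c * Real.sqrt (L / n) + d / Real.sqrt n ≥ vstar := by
    rw [ge_iff_le, ← hkey, ← hdn]
    have hx : n * vstar ≤ u + c * Real.sqrt (n * L) + d * Real.sqrt n := by linarith [h1.1]
    calc vstar ≤ (u + c * Real.sqrt (n * L) + d * Real.sqrt n) / n :=
          (le_div_iff₀ hn).mpr (by linarith [mul_comm vstar n])
      _ = u / n + c * (Real.sqrt (n * L) / n) + d * Real.sqrt n / n := by ring
  refine ⟨hmain, hopt, ?_⟩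
  intro nj uj ubarj Lj hnj hLj hcj hoj
  have hj := abs_le.mp hcj
  have hkj : Real.sqrt (nj * Lj) / nj = Real.sqrt (Lj / nj) := sqrt_mul_div_aux nj Lj hnj hLj
  have hstep : uj / nj - c * Real.sqrt (Lj / nj) ≤ ubarj / nj := by
    rw [← hkj]
    have hx : uj - c * Real.sqrt (nj * Lj) ≤ ubarj := by linarith [hj.1]
    calc uj / nj - c * (Real.sqrt (nj * Lj) / nj)
        = (uj - c * Real.sqrt (nj * Lj)) / nj := by ring
      _ ≤ ubarj / nj := by gcongr
  linarith [hoj, hmain]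
end

section
/- Let M ≥ 1 and suppose a process selects at each discrete step the index minimizing a potential φ^i, and after selecting index i its potential increases to at most 3 times the minimum potential at selection time, while unselected potentials are unchanged. If initially all potentials are equal, then at all times φ^i ≤ 3 φ^j for all i, j. -/
theorem stmt_10 (M : ℕ) (hM : 1 ≤ M) (φ : ℕ → Fin M → NNReal) (sel : ℕ → Fin M)
    (hmin : ∀ t i, φ t (sel t) ≤ φ t i)
    (hgrow : ∀ t, φ t (sel t) ≤ φ (t + 1) (sel t) ∧ φ (t + 1) (sel t) ≤ 3 * φ t (sel t))
    (hfix : ∀ t i, i ≠ sel t → φ (t + 1) i = φ t i)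
    (hinit : ∀ i j, φ 0 i = φ 0 j) :
    ∀ t i j, φ t i ≤ 3 * φ t j := by
  intro t
  induction t with
  | zero =>
    intro i j
    rw [hinit i j]
    calc φ 0 j = 1 * φ 0 j := (one_mul _).symm
    _ ≤ 3 * φ 0 j := by
      apply mul_le_mul_left ; norm_num
  | succ t ih =>
    intro i j
    have hj : φ t j ≤ φ (t + 1) j := by
      by_cases h : j = sel t
      · subst h; exact (hgrow t).1
      · rw [hfix t j h]
    by_cases h : i = sel t
    · subst h
      calc φ (t + 1) (sel t) ≤ 3 * φ t (sel t) := (hgrow t).2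
      _ ≤ 3 * φ t j := mul_le_mul_right (hmin t j) 3
      _ ≤ 3 * φ (t + 1) j := mul_le_mul_right hj 3
    · rw [hfix t i h]
      calc φ t i ≤ 3 * φ t j := ih i j
      _ ≤ 3 * φ (t + 1) j := mul_le_mul_right hj 3
end
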